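/- Let α ∈ (0,1) be irrational and let θ ∈ ℝ with θ ∉ 1/2 + αℤ + ℤ and θ − 1/2 irrational. Then there exists N such that for every n ≥ N there exists a pair (m, ℓ) ∈ ℤ² that is θ-minimal at scale q_n. -/

import Mathlib

open Real Filter

/-- Gauss map iterates: `α_0 = α`, `α_{k+1} = {1/α_k}`. -/
noncomputable def gaussMap (a : ℝ) : ℕ → ℝ
  | 0 => a
  | k + 1 => Int.fract (gaussMap a k)⁻¹

/-- Continued fraction partial quotients: `a_k = ⌊1/α_{k-1}⌋` for `k ≥ 1`. -/
noncomputable def cfA (a : ℝ) : ℕ → ℕ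
  | 0 => 0
  | k + 1 => (⌊(gaussMap a k)⁻¹⌋).toNat

/-- Denominators of the continued fraction convergents:
`q_0 = 1`, `q_1 = a_1`, `q_{n+2} = a_{n+2} q_{n+1} + q_n`. -/
noncomputable def cfQ (a : ℝ) : ℕ → ℕ
  | 0 => 1
  | 1 => cfA a 1
  | n + 2 => cfA a (n + 2) * cfQ a (n + 1) + cfQ a n

lemma gaussMap_succ (a : ℝ) (k : ℕ) : gaussMap a (k+1) = Int.fract (gaussMap a k)⁻¹ := rfl
lemma cfA_succ (a : ℝ) (k : ℕ) : cfA a (k+1) = (⌊(gaussMap a k)⁻¹⌋).toNat := rfl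
lemma cfQ_zero (a : ℝ) : cfQ a 0 = 1 := rfl
lemma cfQ_one (a : ℝ) : cfQ a 1 = cfA a 1 := rfl
lemma cfQ_two (a : ℝ) (n : ℕ) : cfQ a (n+2) = cfA a (n + 2) * cfQ a (n + 1) + cfQ a n := rfl


/-- Distance from `x` to the nearest integer. -/
noncomputable def nint (x : ℝ) : ℝ := |x - round x|

section basics
variable {a : ℝ} (ha : Irrational a) (ha0 : 0 < a) (ha1 : a < 1)
include ha ha0 ha1

lemma gm_basic : ∀ k, 0 < gaussMap a k ∧ gaussMap a k < 1 ∧ Irrational (gaussMap a k) := by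
  intro k
  induction k with
  | zero => exact ⟨ha0, ha1, ha⟩
  | succ k ih =>
    obtain ⟨h0, h1, hi⟩ := ih
    have hinv : Irrational (gaussMap a k)⁻¹ := hi.inv
    have hfr : Irrational (Int.fract (gaussMap a k)⁻¹) := by
      simpa [Int.fract, sub_eq_add_neg] using hinv.sub_intCast ⌊(gaussMap a k)⁻¹⌋
    refine ⟨?_, ?_, ?_⟩
    · rcases (Int.fract_nonneg (gaussMap a k)⁻¹).lt_or_eq with h | h
      · simpa [gaussMap_succ] using h
      · exfalso
        have : Int.fract (gaussMap a k)⁻¹ = ((0:ℤ):ℝ) := by exact_mod_cast h.symm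
        exact hfr.ne_int 0 this
    · simpa [gaussMap_succ] using Int.fract_lt_one (gaussMap a k)⁻¹
    · simpa [gaussMap_succ] using hfr

lemma cfA_pos (k : ℕ) : 1 ≤ cfA a (k + 1) := by
  obtain ⟨h0, h1, _⟩ := gm_basic ha ha0 ha1 k
  have h2 : (1:ℝ) < (gaussMap a k)⁻¹ := (one_lt_inv₀ h0).2 h1
  have h3 : (1:ℤ) ≤ ⌊(gaussMap a k)⁻¹⌋ := by
    rw [Int.le_floor]; exact_mod_cast h2.le
  rw [cfA_succ]; omega

lemma cfA_real (k : ℕ) : (cfA a (k+1) : ℝ) = (⌊(gaussMap a k)⁻¹⌋ : ℝ) := by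
  have h := cfA_pos ha ha0 ha1 k
  rw [cfA_succ] at h ⊢
  have h2 : (0:ℤ) ≤ ⌊(gaussMap a k)⁻¹⌋ := by omega
  exact_mod_cast congrArg (fun z : ℤ => (z:ℝ)) (Int.toNat_of_nonneg h2)

lemma gm_succ_eq (k : ℕ) :
    gaussMap a (k+1) = (gaussMap a k)⁻¹ - cfA a (k+1) := by
  rw [cfA_real ha ha0 ha1 k, gaussMap_succ, Int.fract]

lemma cfQ_pos : ∀ n, 1 ≤ cfQ a n := by
  intro n
  induction n using Nat.strong_induction_on with
  | _ n ih =>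
    match n with
    | 0 => simp [cfQ_zero]
    | 1 => rw [cfQ_one]; exact cfA_pos ha ha0 ha1 0
    | (n+2) =>
      have h1 := ih (n+1) (by omega)
      have h2 := cfA_pos ha ha0 ha1 (n+1)
      rw [cfQ_two]
      nlinarith

lemma cfQ_mono (n : ℕ) : cfQ a n ≤ cfQ a (n+1) := by
  match n with
  | 0 => rw [cfQ_zero, cfQ_one]; exact cfA_pos ha ha0 ha1 0
  | (n+1) =>
    have h1 := cfQ_pos ha ha0 ha1 n
    have h2 := cfQ_pos ha ha0 ha1 (n+1)
    have h3 := cfA_pos ha ha0 ha1 (n+1)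
    rw [cfQ_two]
    nlinarith

end basics

/-- Convergent numerators. -/
noncomputable def pP (a : ℝ) : ℕ → ℤ
  | 0 => 0
  | 1 => 1
  | n + 2 => (cfA a (n + 2) : ℤ) * pP a (n + 1) + pP a n

lemma pP_two (a : ℝ) (n : ℕ) : pP a (n+2) = (cfA a (n + 2) : ℤ) * pP a (n + 1) + pP a n := rfl

/-- `X n = ∏_{k=0}^n α_k`. -/
noncomputable def Xprod (a : ℝ) (n : ℕ) : ℝ := ∏ k ∈ Finset.range (n+1), gaussMap a k

lemma Xprod_succ (a : ℝ) (n : ℕ) : Xprod a (n+1) = Xprod a n * gaussMap a (n+1) := by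
  rw [Xprod, Finset.prod_range_succ]; rfl

section main
variable {a : ℝ} (ha : Irrational a) (ha0 : 0 < a) (ha1 : a < 1)
include ha ha0 ha1

lemma Xprod_pos (n : ℕ) : 0 < Xprod a n := by
  apply Finset.prod_pos
  intro k _
  exact (gm_basic ha ha0 ha1 k).1

lemma Xprod_lt_one (n : ℕ) : Xprod a n < 1 := by
  induction n with
  | zero => simpa [Xprod, gaussMap] using ha1
  | succ n ih =>
    rw [Xprod_succ]
    have h1 := (gm_basic ha ha0 ha1 (n+1)).1
    have h2 := (gm_basic ha ha0 ha1 (n+1)).2.1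
    have := Xprod_pos ha ha0 ha1 n
    nlinarith

/-- The X recurrence: `X n = a_{n+2} X_{n+1} + X_{n+2}`. -/
lemma Xprod_rec (n : ℕ) :
    Xprod a n = (cfA a (n+2) : ℝ) * Xprod a (n+1) + Xprod a (n+2) := by
  have h1 : Xprod a (n+2) = Xprod a (n+1) * gaussMap a (n+2) := Xprod_succ a (n+1)
  have h2 : gaussMap a (n+2) = (gaussMap a (n+1))⁻¹ - cfA a (n+2) := gm_succ_eq ha ha0 ha1 (n+1)
  have h3 : Xprod a (n+1) = Xprod a n * gaussMap a (n+1) := Xprod_succ a n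
  have h4 : gaussMap a (n+1) ≠ 0 := ne_of_gt (gm_basic ha ha0 ha1 (n+1)).1
  rw [h1, h2, h3]
  field_simp
  ring

/-- `q_n α - p_n = (-1)^n X_n`. -/
lemma x_eq : ∀ n, (cfQ a n : ℝ) * a - (pP a n : ℝ) = (-1:ℝ)^n * Xprod a n := by
  have base0 : (cfQ a 0 : ℝ) * a - (pP a 0 : ℝ) = (-1:ℝ)^0 * Xprod a 0 := by
    simp [cfQ_zero, pP, Xprod]
    rfl
  have base1 : (cfQ a 1 : ℝ) * a - (pP a 1 : ℝ) = (-1:ℝ)^1 * Xprod a 1 := by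
    have hX : Xprod a 1 = Xprod a 0 * gaussMap a 1 := Xprod_succ a 0
    have h2 : gaussMap a 1 = (gaussMap a 0)⁻¹ - cfA a 1 := gm_succ_eq ha ha0 ha1 0
    have hg0 : gaussMap a 0 = a := rfl
    have hX0 : Xprod a 0 = a := by simp [Xprod]; rfl
    have ha' : a ≠ 0 := ne_of_gt ha0
    rw [cfQ_one, hX, h2, hX0, hg0]
    simp [pP]
    field_simp
    ring
  intro n
  induction n using Nat.strong_induction_on with
  | _ n ih =>
    match n with
    | 0 => exact base0
    | 1 => exact base1
    | (n+2) =>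
      have h1 := ih (n+1) (by omega)
      have h0 := ih n (by omega)
      have hrec := Xprod_rec ha ha0 ha1 n
      rw [cfQ_two, pP_two]
      push_cast
      rw [pow_succ, pow_succ]
      linear_combination (cfA a (n+2) : ℝ) * h1 + h0 + ((-1:ℝ)^n) * hrec

/-- Determinant: `p_{n+1} q_n - p_n q_{n+1} = (-1)^n`. -/
lemma det_eq : ∀ n, pP a (n+1) * (cfQ a n : ℤ) - pP a n * (cfQ a (n+1) : ℤ) = (-1:ℤ)^n := by
  intro n
  induction n with
  | zero => simp [pP, cfQ_zero]
  | succ n ih =>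
    rw [pP_two, cfQ_two]
    push_cast
    rw [pow_succ]
    nlinarith [ih]

/-- `q_{n+1} X_n + q_n X_{n+1} = 1`. -/
lemma one_eq (n : ℕ) :
    (cfQ a (n+1) : ℝ) * Xprod a n + (cfQ a n : ℝ) * Xprod a (n+1) = 1 := by
  have hd := det_eq ha ha0 ha1 n
  have hd' : (pP a (n+1) : ℝ) * (cfQ a n : ℝ) - (pP a n : ℝ) * (cfQ a (n+1) : ℝ) = (-1:ℝ)^n := by
    exact_mod_cast congrArg (fun z : ℤ => (z:ℝ)) hd
  have h1 := x_eq ha ha0 ha1 n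
  have h2 := x_eq ha ha0 ha1 (n+1)
  have key : (-1:ℝ)^n * ((cfQ a (n+1) : ℝ) * Xprod a n + (cfQ a n : ℝ) * Xprod a (n+1))
      = (-1:ℝ)^n := by
    linear_combination -((cfQ a (n+1):ℝ)) * h1 + ((cfQ a n:ℝ)) * h2 + hd'
  rcases Nat.even_or_odd n with he | ho
  · rw [he.neg_one_pow] at key; linarith
  · rw [ho.neg_one_pow] at key; linarith


/-- `X_n < 1/2` for `n ≥ 1`. -/
lemma Xprod_half (n : ℕ) : Xprod a (n+1) < 1/2 := by
  have hX1 : Xprod a 1 < 1/2 := by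
    have hX : Xprod a 1 = Xprod a 0 * gaussMap a 1 := Xprod_succ a 0
    have h2 : gaussMap a 1 = (gaussMap a 0)⁻¹ - cfA a 1 := gm_succ_eq ha ha0 ha1 0
    have hg0 : gaussMap a 0 = a := rfl
    have hX0 : Xprod a 0 = a := by simp [Xprod]; rfl
    have ha' : a ≠ 0 := ne_of_gt ha0
    have hval : Xprod a 1 = 1 - a * (cfA a 1) := by
      rw [hX, h2, hX0, hg0]; field_simp
    rcases le_or_gt (cfA a 1) 1 with hA | hA
    · -- a₁ = 1, so a > 1/2 (since ⌊1/a⌋ = 1 means 1/a < 2)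
      have hA1 : cfA a 1 = 1 := le_antisymm hA (cfA_pos ha ha0 ha1 0)
      have hfl : (⌊(gaussMap a 0)⁻¹⌋ : ℝ) = 1 := by
        rw [← cfA_real ha ha0 ha1 0, hA1]; norm_num
      have : (gaussMap a 0)⁻¹ < 2 := by
        have := Int.lt_floor_add_one (gaussMap a 0)⁻¹
        rw [hfl] at this; linarith
      rw [hg0] at this
      have hhalf : 1/2 < a := by
        have h2a : 1 < 2 * a := by
          have := (inv_lt_iff_one_lt_mul₀ ha0).mp this
          linarith
        linarith
      rw [hval, hA1]; push_cast; linarith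
    · -- a₁ ≥ 2 : X₁ < a < 1/2? X₁ = 1 - a·a₁ ≤ 1 - 2a, and a < 1/2 since 1/a > 2
      have hA2 : (2:ℝ) ≤ (cfA a 1 : ℝ) := by exact_mod_cast hA
      have hXpos := Xprod_pos ha ha0 ha1 1
      have hfl2 : 1/a - 1 < (cfA a 1:ℝ) := by
        rw [cfA_real ha ha0 ha1 0, hg0, ← one_div]
        exact Int.sub_one_lt_floor (1/a)
      have hprod : 1 - a < a * (cfA a 1:ℝ) := by
        have := mul_lt_mul_of_pos_left hfl2 ha0
        rw [mul_sub, mul_one_div, div_self ha'] at this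
        linarith
      rw [hval] at hXpos ⊢
      nlinarith
  induction n with
  | zero => exact hX1
  | succ n ih =>
    have h1 := (gm_basic ha ha0 ha1 (n+2)).2.1
    have h0 := (gm_basic ha ha0 ha1 (n+2)).1
    have hp := Xprod_pos ha ha0 ha1 (n+1)
    rw [Xprod_succ]
    nlinarith

end main

section nintlem

lemma nint_nonneg (x : ℝ) : 0 ≤ nint x := abs_nonneg _

lemma nint_le (x : ℝ) (z : ℤ) : nint x ≤ |x - z| := round_le x z

lemma nint_le_half (x : ℝ) : nint x ≤ 1/2 := abs_sub_round x

lemma nint_int_add (x : ℝ) (z : ℤ) : nint ((z:ℝ) + x) = nint x := by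
  unfold nint
  rw [add_comm, round_add_intCast]
  push_cast
  ring_nf

lemma nint_eq_abs {x : ℝ} (h : |x| < 1/2) : nint x = |x| := by
  unfold nint
  rw [round_eq_zero_iff.2 ⟨by cases abs_lt.1 h; linarith, by cases abs_lt.1 h; linarith⟩]
  norm_num

lemma nint_add_ge (x y : ℝ) : nint x - |y| ≤ nint (x + y) := by
  have h1 : nint x ≤ |x - round (x + y)| := nint_le x _
  have h2 : |x - round (x+y)| ≤ |x + y - round (x+y)| + |y| := by
    have : x - round (x+y) = (x + y - round (x+y)) + (-y) := by ring
    rw [this]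
    calc |(x + y - round (x+y)) + (-y)| ≤ |x + y - round (x+y)| + |-y| := abs_add_le _ _
    _ = |x + y - round (x+y)| + |y| := by rw [abs_neg]
  have h3 : nint (x+y) = |x + y - round (x+y)| := rfl
  linarith

lemma nint_pos {x : ℝ} (h : Irrational x) : 0 < nint x := by
  rcases (nint_nonneg x).lt_or_eq with h' | h'
  · exact h'
  · exfalso
    have : x = ((round x : ℤ) : ℝ) := by
      have := abs_eq_zero.1 h'.symm
      linarith
    exact h.ne_int _ this

end nintlem

section bestapprox
variable {a : ℝ} (ha : Irrational a) (ha0 : 0 < a) (ha1 : a < 1)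
include ha ha0 ha1

set_option maxHeartbeats 1000000 in
/-- Best approximation: for `0 < |k| < q_{m+1}`, `‖k α‖ ≥ X_m`. -/
lemma best_approx (m : ℕ) (k : ℤ) (hk0 : k ≠ 0) (hk : |k| < (cfQ a (m+1) : ℤ)) :
    Xprod a m ≤ nint ((k:ℝ) * a) := by
  set j : ℤ := round ((k:ℝ) * a) with hj
  set s : ℤ := (-1)^m with hs
  set u : ℤ := s * (pP a (m+1) * k - (cfQ a (m+1) : ℤ) * j) with hu
  set v : ℤ := s * ((cfQ a m : ℤ) * j - pP a m * k) with hv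
  have hdet := det_eq ha ha0 ha1 m
  have hss : s * s = 1 := by
    rw [hs, ← pow_add]
    exact Even.neg_one_pow ⟨m, rfl⟩
  have hk_eq : u * (cfQ a m : ℤ) + v * (cfQ a (m+1) : ℤ) = k := by
    rw [hu, hv]
    have : s * (pP a (m+1) * k - (cfQ a (m+1):ℤ) * j) * (cfQ a m : ℤ)
        + s * ((cfQ a m : ℤ) * j - pP a m * k) * (cfQ a (m+1):ℤ)
        = s * (pP a (m+1) * (cfQ a m:ℤ) - pP a m * (cfQ a (m+1):ℤ)) * k := by ring
    rw [this, hdet, ← hs, hss, one_mul]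
  have hj_eq : u * pP a m + v * pP a (m+1) = j := by
    rw [hu, hv]
    have : s * (pP a (m+1) * k - (cfQ a (m+1):ℤ) * j) * pP a m
        + s * ((cfQ a m : ℤ) * j - pP a m * k) * pP a (m+1)
        = s * (pP a (m+1) * (cfQ a m:ℤ) - pP a m * (cfQ a (m+1):ℤ)) * j := by ring
    rw [this, hdet, ← hs, hss, one_mul]
  -- real decomposition
  have hxm := x_eq ha ha0 ha1 m
  have hxm1 := x_eq ha ha0 ha1 (m+1)
  have hdecomp : (k:ℝ) * a - (j:ℝ)
      = (u:ℝ) * ((-1:ℝ)^m * Xprod a m) + (v:ℝ) * ((-1:ℝ)^(m+1) * Xprod a (m+1)) := by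
    rw [← hxm, ← hxm1]
    have hk' : ((u * (cfQ a m : ℤ) + v * (cfQ a (m+1) : ℤ) : ℤ) : ℝ) = (k:ℝ) := by
      exact_mod_cast congrArg (fun z : ℤ => (z:ℝ)) hk_eq
    have hj' : ((u * pP a m + v * pP a (m+1) : ℤ) : ℝ) = (j:ℝ) := by
      exact_mod_cast congrArg (fun z : ℤ => (z:ℝ)) hj_eq
    push_cast at hk' hj'
    linear_combination hj' - a * hk'
  have hnint : nint ((k:ℝ) * a) = |(k:ℝ) * a - (j:ℝ)| := rfl
  clear_value j s u v
  clear hu hv hj hs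
  rw [hnint, hdecomp]
  have hXm := Xprod_pos ha ha0 ha1 m
  have hXm1 := Xprod_pos ha ha0 ha1 (m+1)
  have hqm : (1:ℤ) ≤ (cfQ a m : ℤ) := by exact_mod_cast cfQ_pos ha ha0 ha1 m
  have hqm1 : (1:ℤ) ≤ (cfQ a (m+1) : ℤ) := by exact_mod_cast cfQ_pos ha ha0 ha1 (m+1)
  -- case analysis on u, v
  have habs : ∀ w : ℝ, |w| ≥ Xprod a m → Xprod a m ≤ |w| := fun w h => h
  rcases eq_or_ne v 0 with hv0 | hv0
  · -- v = 0, u ≠ 0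
    have hu0 : u ≠ 0 := by
      intro h
      rw [h, hv0] at hk_eq
      simp at hk_eq
      exact hk0 hk_eq.symm
    have h1 : (1:ℝ) ≤ |(u:ℝ)| := by
      have : (1:ℤ) ≤ |u| := Int.one_le_abs hu0
      calc (1:ℝ) ≤ ((|u|:ℤ):ℝ) := by exact_mod_cast this
      _ = |(u:ℝ)| := by push_cast; rfl
    rw [hv0]
    push_cast
    rw [zero_mul, add_zero, abs_mul, abs_mul]
    have : |(-1:ℝ)^m| = 1 := by rw [abs_pow, abs_neg, abs_one, one_pow]
    rw [this, one_mul, abs_of_pos hXm]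
    nlinarith
  · rcases eq_or_ne u 0 with hu0 | hu0
    · -- u = 0, v ≠ 0: |k| = |v| q_{m+1} ≥ q_{m+1}, contradiction
      exfalso
      rw [hu0, zero_mul, zero_add] at hk_eq
      have : (cfQ a (m+1) : ℤ) ≤ |k| := by
        rw [← hk_eq, abs_mul]
        have h1 : (1:ℤ) ≤ |v| := Int.one_le_abs hv0
        have h2 : |(cfQ a (m+1) : ℤ)| = (cfQ a (m+1):ℤ) := abs_of_pos (by omega)
        nlinarith
      omega
    · -- u ≠ 0, v ≠ 0: signs must be opposite
      have hsign : u * v < 0 := by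
        by_contra hcon
        push_neg at hcon
        have huv : 0 < u * v := lt_of_le_of_ne hcon (by
          intro h
          rcases mul_eq_zero.1 h.symm with h' | h' <;> [exact hu0 h'; exact hv0 h'])
        -- same sign: |k| = |u| q_m + |v| q_{m+1} ≥ q_{m+1}
        have : (cfQ a (m+1) : ℤ) ≤ |k| := by
          rw [← hk_eq]
          rcases lt_or_gt_of_ne hu0 with hu' | hu'
          · have hv' : v < 0 := by nlinarith
            rw [abs_of_nonpos (by nlinarith)]
            nlinarith
          · have hv' : 0 < v := by nlinarith
            rw [abs_of_nonneg (by nlinarith)]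
            nlinarith
        omega
      -- opposite signs ⇒ the two terms have the same sign
      have genkey : ∀ X Y U V : ℝ, 0 < X → 0 < Y →
          ((U ≤ -1 ∧ 1 ≤ V) ∨ (1 ≤ U ∧ V ≤ -1)) → X ≤ |U * X - V * Y| := by
        intro X Y U V hX hY hUV
        rcases hUV with ⟨h1, h2⟩ | ⟨h1, h2⟩
        · rw [abs_of_nonpos (by nlinarith)]
          nlinarith
        · rw [abs_of_nonneg (by nlinarith)]
          nlinarith
      have key : Xprod a m ≤ |(u:ℝ) * Xprod a m - (v:ℝ) * Xprod a (m+1)| := by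
        apply genkey _ _ _ _ hXm hXm1
        rcases lt_or_gt_of_ne hu0 with hu' | hu'
        · have hv' : 0 < v := by
            rcases lt_trichotomy v 0 with h | h | h
            · nlinarith
            · exact absurd h hv0
            · exact h
          exact Or.inl ⟨by exact_mod_cast (by omega : u ≤ -1), by exact_mod_cast (by omega : 1 ≤ v)⟩
        · have hv' : v < 0 := by
            rcases lt_trichotomy v 0 with h | h | h
            · exact h
            · exact absurd h hv0
            · nlinarith
          exact Or.inr ⟨by exact_mod_cast (by omega : 1 ≤ u), by exact_mod_cast (by omega : v ≤ -1)⟩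
      have heq : (u:ℝ) * ((-1:ℝ)^m * Xprod a m) + (v:ℝ) * ((-1:ℝ)^(m+1) * Xprod a (m+1))
          = (-1:ℝ)^m * ((u:ℝ) * Xprod a m - (v:ℝ) * Xprod a (m+1)) := by
        rw [pow_succ]; ring
      rw [heq, abs_mul, abs_pow, abs_neg, abs_one, one_pow, one_mul]
      exact key

end bestapprox

lemma window_mem (q : ℕ) (hq : 1 ≤ q) (k : ℤ) :
    k ∈ Finset.Ico (-((q:ℤ)/2)) (((q:ℤ)+1)/2) ↔ (-(q:ℝ)/2 ≤ (k:ℝ) ∧ (k:ℝ) < (q:ℝ)/2) := by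
  rw [Finset.mem_Ico]
  have h1 : (-((q:ℤ)/2) ≤ k) ↔ (-(q:ℤ) ≤ 2*k) := by omega
  have h2 : (k < ((q:ℤ)+1)/2) ↔ (2*k < (q:ℤ)) := by omega
  rw [h1, h2]
  constructor
  · rintro ⟨hA, hB⟩
    have hA' : ((-(q:ℤ):ℤ):ℝ) ≤ ((2*k:ℤ):ℝ) := by exact_mod_cast hA
    have hB' : ((2*k:ℤ):ℝ) < (((q:ℤ)):ℝ) := by exact_mod_cast hB
    push_cast at hA' hB'
    constructor <;> linarith
  · rintro ⟨hA, hB⟩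
    have hA' : (-(q:ℝ)) ≤ 2*(k:ℝ) := by linarith
    have hB' : 2*(k:ℝ) < (q:ℝ) := by linarith
    constructor
    · exact_mod_cast hA'
    · exact_mod_cast hB'


/-- `δ_n = (log ‖q_n(θ-1/2)‖ - log ‖q_n α‖)/q_n`. -/
noncomputable def deltan (a θ : ℝ) (n : ℕ) : ℝ :=
  (Real.log (nint ((cfQ a n : ℝ) * (θ - 1 / 2))) - Real.log (nint ((cfQ a n : ℝ) * a))) /
    (cfQ a n : ℝ)

/-- `(m, ℓ) ∈ ℤ²` is `θ`-minimal at scale `q_n`. -/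
def ThetaMinimal (a θ : ℝ) (n : ℕ) (m ℓ : ℤ) : Prop :=
  (-(cfQ a n : ℝ) / 2 ≤ (m : ℝ) ∧ (m : ℝ) < (cfQ a n : ℝ) / 2) ∧
  |(ℓ : ℝ)| ≤ (Real.exp (deltan a θ n * cfQ a n) + cfQ a n + 1 / 2) / cfQ a n ∧
  nint (θ - 1 / 2 + ((m : ℝ) + (ℓ : ℝ) * cfQ a n) * a) <
    (1 / 2 + 1 / (2 * cfQ a n)) * nint ((cfQ a n : ℝ) * a) ∧
  ((4 ≤ cfA a (n + 1) →
      ∀ j : ℤ, |(j : ℝ)| ≤ (cfA a (n + 1) : ℝ) / 6 →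
        ∀ k : ℤ, |(k : ℝ)| < (cfQ a n : ℝ) →
          nint (θ - 1 / 2 + ((m : ℝ) + (j : ℝ) * cfQ a n) * a) ≤
            20 * nint (θ - 1 / 2 + ((m : ℝ) + (j : ℝ) * cfQ a n + (k : ℝ)) * a)) ∧
    (cfA a (n + 1) ≤ 3 →
      ∀ k : ℤ, -(cfQ a n : ℝ) / 2 ≤ (k : ℝ) → (k : ℝ) < (cfQ a n : ℝ) / 2 →
        nint (θ - 1 / 2 + (m : ℝ) * a) ≤ 20 * nint (θ - 1 / 2 + (k : ℝ) * a)))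

set_option maxHeartbeats 4000000 in
/-- for all sufficiently large `n` there exists a `θ`-minimal pair
`(m, ℓ)` at scale `q_n`. -/
theorem stmt17 (a θ : ℝ) (ha : Irrational a) (ha0 : 0 < a) (ha1 : a < 1)
    (hθ1 : ∀ k l : ℤ, θ ≠ 1 / 2 + k * a + l) (hθ2 : Irrational (θ - 1 / 2)) :
    ∃ N : ℕ, ∀ n : ℕ, N ≤ n → ∃ m ℓ : ℤ, ThetaMinimal a θ n m ℓ := by
  refine ⟨1, fun n hn => ?_⟩
  obtain ⟨M, rfl⟩ : ∃ M, n = M + 1 := ⟨n - 1, by omega⟩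
  have hq1 : 1 ≤ cfQ a (M+1) := cfQ_pos ha ha0 ha1 (M+1)
  set θ' : ℝ := θ - 1/2 with hθ'def
  set q : ℕ := cfQ a (M+1) with hqdef
  set Q : ℝ := (q:ℝ) with hQdef
  have hQ1 : (1:ℝ) ≤ Q := by rw [hQdef]; exact_mod_cast hq1
  have hQ0 : (0:ℝ) < Q := by linarith
  set p : ℤ := pP a (M+1) with hpdef
  set β : ℝ := Xprod a (M+1) with hβdef
  set β' : ℝ := Xprod a M with hβ'def
  set β'' : ℝ := Xprod a (M+2) with hβ''def
  have hβpos : 0 < β := Xprod_pos ha ha0 ha1 (M+1)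
  have hβ'pos : 0 < β' := Xprod_pos ha ha0 ha1 M
  have hβ''pos : 0 < β'' := Xprod_pos ha ha0 ha1 (M+2)
  have hβhalf : β < 1/2 := Xprod_half ha ha0 ha1 M
  set e : ℝ := (-1:ℝ)^(M+1) * β with hedef
  have hQae : Q * a - (p:ℝ) = e := x_eq ha ha0 ha1 (M+1)
  have heabs : |e| = β := by
    rw [hedef, abs_mul, abs_pow, abs_neg, abs_one, one_pow, one_mul, abs_of_pos hβpos]
  have he0 : e ≠ 0 := by
    intro h
    rw [h, abs_zero] at heabs
    exact absurd heabs.symm (ne_of_gt hβpos)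
  have hnintQa : nint (Q * a) = β := by
    have h1 : Q * a = (p:ℝ) + e := by linarith
    rw [h1, nint_int_add e p, nint_eq_abs (by rw [heabs]; linarith), heabs]
  have hQθ'irr : Irrational (Q * θ') := hθ2.natCast_mul (by omega)
  set t : ℝ := nint (Q * θ') with htdef
  have htpos : 0 < t := nint_pos hQθ'irr
  have tle : t ≤ 1/2 := nint_le_half _
  set P : ℤ := round (Q * θ') with hPdef
  have htabs : t = |Q * θ' - (P:ℝ)| := rfl
  have hone : Q * β' + (cfQ a M : ℝ) * β = 1 := one_eq ha ha0 ha1 M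
  have hqm : (cfQ a M : ℝ) ≤ Q := by rw [hQdef, hqdef]; exact_mod_cast cfQ_mono ha ha0 ha1 M
  have h1Q : 1 ≤ Q*β' + Q*β := by nlinarith only [hone, hqm, hβpos]
  have hrecβ : β' = (cfA a (M+2):ℝ) * β + β'' := Xprod_rec ha ha0 ha1 M
  set S : Finset ℤ := Finset.Ico (-((q:ℤ)/2)) (((q:ℤ)+1)/2) with hSdef
  have hmemS : ∀ k : ℤ, k ∈ S ↔ (-Q/2 ≤ (k:ℝ) ∧ (k:ℝ) < Q/2) := fun k => window_mem q hq1 k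
  have hS0 : (0:ℤ) ∈ S := by
    rw [hmemS 0]
    norm_num
    constructor <;> linarith
  have hdet := det_eq ha ha0 ha1 (M+1)
  rw [← hpdef, ← hqdef] at hdet
  have hs2 : ((-1:ℤ)^(M+1)) * ((-1:ℤ)^(M+1)) = 1 := by
    rw [← pow_add]; exact Even.neg_one_pow ⟨M+1, rfl⟩
  have hcop : (-(-1:ℤ)^(M+1) * (cfQ a (M+2):ℤ)) * p + ((-1:ℤ)^(M+1) * pP a (M+2)) * (q:ℤ) = 1 := by
    linear_combination ((-1:ℤ)^(M+1)) * hdet + hs2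
  -- convert the goal into abstract-variable form
  simp only [ThetaMinimal]
  rw [← hqdef, ← hQdef, ← hθ'def, hnintQa]
  -- forget the heavy definitions
  clear_value θ' q Q p β β' β'' e t P
  -- argmin over the window
  obtain ⟨w, hwS, hwmin⟩ := S.exists_min_image (fun k => nint (θ' + (k:ℝ) * a)) ⟨0, hS0⟩
  -- Bezout representative
  set u : ℤ := -(-1:ℤ)^(M+1) * (cfQ a (M+2):ℤ) with hudef
  set r : ℤ := -P * u with hrdef
  have hdvd_r : (q:ℤ) ∣ (P + r * p) := by
    refine ⟨P * ((-1:ℤ)^(M+1) * pP a (M+2)), ?_⟩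
    rw [hrdef, hudef]
    linear_combination (-P) * hcop
  have hq0' : (0:ℤ) < (q:ℤ) := by exact_mod_cast hq1
  set h2 : ℤ := (q:ℤ)/2 with h2def
  set m₀ : ℤ := (r + h2) % (q:ℤ) - h2 with hm₀def
  have hmod1 : 0 ≤ (r + h2) % (q:ℤ) := Int.emod_nonneg _ (ne_of_gt hq0')
  have hmod2 : (r + h2) % (q:ℤ) < (q:ℤ) := Int.emod_lt_of_pos _ hq0'
  have hm₀lo : -(q:ℤ) ≤ 2*m₀ := by omega
  have hm₀hi : 2*m₀ < (q:ℤ) := by omega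
  have hm₀S : m₀ ∈ S := by
    rw [hSdef]
    exact Finset.mem_Ico.2 ⟨by omega, by omega⟩
  have hm₀r : (q:ℤ) ∣ (m₀ - r) := ⟨-((r + h2)/(q:ℤ)), by rw [hm₀def, Int.emod_def]; ring⟩
  have hdvd_m₀ : (q:ℤ) ∣ (P + m₀ * p) := by
    have hsplit : P + m₀ * p = (P + r * p) + (m₀ - r) * p := by ring
    rw [hsplit]; exact dvd_add hdvd_r (hm₀r.mul_right p)
  obtain ⟨c₀, hc₀⟩ := hdvd_m₀
  -- bound at m₀
  have habs_m₀ : |(m₀:ℝ)| ≤ Q/2 := by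
    have h1 : (2*m₀:ℤ) ≤ (q:ℤ) := by omega
    have h1' : -(q:ℤ) ≤ (2*m₀:ℤ) := hm₀lo
    have hc1 : (2:ℝ)*(m₀:ℝ) ≤ Q := by rw [hQdef]; exact_mod_cast h1
    have hc2 : -Q ≤ (2:ℝ)*(m₀:ℝ) := by rw [hQdef]; exact_mod_cast h1'
    rw [abs_le]; constructor <;> linarith
  have hc₀' : (P:ℝ) + (m₀:ℝ)*(p:ℝ) = Q * (c₀:ℝ) := by
    rw [hQdef]
    exact_mod_cast congrArg (fun z : ℤ => (z:ℝ)) hc₀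
  have hεm : θ' + (m₀:ℝ)*a - (c₀:ℝ) = ((Q*θ' - (P:ℝ)) + (m₀:ℝ)*e)/Q := by
    rw [eq_div_iff (ne_of_gt hQ0)]
    linear_combination (m₀:ℝ) * hQae + hc₀'
  have hfm₀ : nint (θ' + (m₀:ℝ)*a) ≤ (t + Q/2*β)/Q := by
    have h1 := nint_le (θ' + (m₀:ℝ)*a) c₀
    rw [hεm] at h1
    have h2' : |((Q*θ' - (P:ℝ)) + (m₀:ℝ)*e)/Q| ≤ (t + Q/2*β)/Q := by
      rw [abs_div, abs_of_pos hQ0]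
      gcongr
      calc |(Q*θ' - (P:ℝ)) + (m₀:ℝ)*e| ≤ |Q*θ' - (P:ℝ)| + |(m₀:ℝ)*e| := abs_add_le _ _
        _ ≤ t + Q/2*β := by
            rw [abs_mul, heabs, ← htabs]
            nlinarith only [habs_m₀, hβpos]
    linarith
  have hfw : nint (θ' + (w:ℝ)*a) ≤ (t + Q/2*β)/Q := le_trans (hwmin m₀ hm₀S) hfm₀
  set c : ℤ := round (θ' + (w:ℝ)*a) with hcdef
  set v' : ℝ := θ' + (w:ℝ)*a - (c:ℝ) with hv'def
  have hfw_eq : nint (θ' + (w:ℝ)*a) = |v'| := rfl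
  have hv'le : |v'| ≤ (t + Q/2*β)/Q := by rw [← hfw_eq]; exact hfw
  set L : ℤ := -round (v'/e) with hLdef
  have hLcast : (L:ℝ) = -((round (v'/e) : ℤ):ℝ) := by rw [hLdef]; push_cast; ring
  clear_value v' L c
  -- condition (2)
  have hdel : deltan a θ (M+1) * Q = Real.log t - Real.log β := by
    simp only [deltan]
    rw [← hqdef, ← hQdef, ← hθ'def, ← htdef, hnintQa, div_mul_cancel₀ _ (ne_of_gt hQ0)]
  
  have hexp : Real.exp (deltan a θ (M+1) * Q) = t/β := by
    rw [hdel, Real.exp_sub, Real.exp_log htpos, Real.exp_log hβpos]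
  have hcond2 : |(L:ℝ)| ≤ (Real.exp (deltan a θ (M+1) * Q) + Q + 1/2)/Q := by
    rw [hexp]
    have h1 : |v'/e - ((round (v'/e):ℤ):ℝ)| ≤ 1/2 := abs_sub_round _
    have h3 := abs_sub_abs_le_abs_sub ((round (v'/e) : ℤ):ℝ) (v'/e)
    rw [abs_sub_comm] at h3
    have hL1 : |(L:ℝ)| ≤ |v'|/β + 1/2 := by
      rw [hLcast, abs_neg]
      have h4 : |v'/e| = |v'|/β := by rw [abs_div, heabs]
      rw [h4] at h3
      linarith
    have hL1' : |(L:ℝ)| * β ≤ |v'| + β/2 := by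
      have := mul_le_mul_of_nonneg_right hL1 hβpos.le
      rw [add_mul, div_mul_cancel₀ _ (ne_of_gt hβpos)] at this
      linarith
    have hv'le' : |v'| * Q ≤ t + Q*β/2 := by
      have := mul_le_mul_of_nonneg_right hv'le hQ0.le
      rw [div_mul_cancel₀ _ (ne_of_gt hQ0)] at this
      linarith
    have hrw : t/β + Q + 1/2 = (t + Q*β + β/2)/β := by
      rw [eq_div_iff (ne_of_gt hβpos), add_mul, add_mul, div_mul_cancel₀ _ (ne_of_gt hβpos)]
      ring
    rw [hrw, div_div, le_div_iff₀ (by positivity)]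
    calc |(L:ℝ)| * (β * Q) = (|(L:ℝ)| * β)*Q := by ring
      _ ≤ (|v'| + β/2)*Q := mul_le_mul_of_nonneg_right hL1' hQ0.le
      _ = |v'| * Q + β/2*Q := by ring
      _ ≤ t + Q*β/2 + β/2*Q := by linarith
      _ ≤ t + Q*β + β/2 := by nlinarith only [hβpos]
  have hexpand3 : θ' + ((w:ℝ) + (L:ℝ)*Q)*a = ((c + L*p : ℤ):ℝ) + (v' + (L:ℝ)*e) := by
    push_cast
    linear_combination (L:ℝ) * hQae - hv'def
  have hcond3 : nint (θ' + ((w:ℝ) + (L:ℝ)*Q)*a) < (1/2 + 1/(2*Q)) * β := by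
    rw [hexpand3, nint_int_add]
    have hval : v' + (L:ℝ)*e = e * (v'/e - ((round (v'/e):ℤ):ℝ)) := by
      rw [hLcast]
      field_simp
      ring
    have h5 := nint_le (v' + (L:ℝ)*e) 0
    rw [Int.cast_zero, sub_zero, hval, abs_mul, heabs] at h5
    have h6 : β * |v'/e - ((round (v'/e):ℤ):ℝ)| ≤ β * (1/2) :=
      mul_le_mul_of_nonneg_left (abs_sub_round _) hβpos.le
    have h7 : 0 < 1/(2*Q) := by positivity
    rw [hval]
    nlinarith only [h5, h6, h7, hβpos]
  have hexpand4 : ∀ j : ℤ, θ' + ((w:ℝ) + (j:ℝ)*Q)*a = ((c + j*p : ℤ):ℝ) + (v' + (j:ℝ)*e) := by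
    intro j
    push_cast
    linear_combination (j:ℝ) * hQae - hv'def
  have hLHS4 : ∀ j : ℤ, nint (θ' + ((w:ℝ) + (j:ℝ)*Q)*a) ≤ |v'| + |(j:ℝ)| * β := by
    intro j
    rw [hexpand4 j, nint_int_add]
    have h5 := nint_le (v' + (j:ℝ)*e) 0
    rw [Int.cast_zero, sub_zero] at h5
    calc nint (v' + (j:ℝ)*e) ≤ |v' + (j:ℝ)*e| := h5
      _ ≤ |v'| + |(j:ℝ)*e| := abs_add_le _ _
      _ = |v'| + |(j:ℝ)| * β := by rw [abs_mul, heabs]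
  refine ⟨w, L, ⟨((hmemS w).1 hwS).1, ((hmemS w).1 hwS).2⟩, hcond2, hcond3, ?_, ?_⟩
  · -- condition (4a)
    intro hA j hj k hk
    rcases eq_or_ne k 0 with rfl | hk0
    · rw [Int.cast_zero, add_zero]
      linarith [nint_nonneg (θ' + ((w:ℝ) + (j:ℝ)*Q)*a), hLHS4 j]
    · have hk' : |k| < (q:ℤ) := by
        have hk2 : |(k:ℝ)| < Q := hk
        rw [hQdef] at hk2
        exact_mod_cast (by push_cast; exact hk2 : ((|k|:ℤ):ℝ) < ((q:ℤ):ℝ))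
      have hexpand5 : θ' + ((w:ℝ) + (j:ℝ)*Q + (k:ℝ))*a
          = ((c + j*p : ℤ):ℝ) + ((k:ℝ)*a + (v' + (j:ℝ)*e)) := by
        push_cast
        linear_combination (j:ℝ) * hQae - hv'def
      have hRHS : β' - (|v'| + |(j:ℝ)| * β) ≤ nint (θ' + ((w:ℝ) + (j:ℝ)*Q + (k:ℝ))*a) := by
        rw [hexpand5, nint_int_add]
        have h1 := nint_add_ge ((k:ℝ)*a) (v' + (j:ℝ)*e)
        rw [hqdef] at hk'
        have h2' := best_approx ha ha0 ha1 M k hk0 hk'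
        rw [← hβ'def] at h2'
        have h3 : |v' + (j:ℝ)*e| ≤ |v'| + |(j:ℝ)| * β := by
          calc |v' + (j:ℝ)*e| ≤ |v'| + |(j:ℝ)*e| := abs_add_le _ _
            _ = |v'| + |(j:ℝ)| * β := by rw [abs_mul, heabs]
        linarith
      have hfw2 : |v'| ≤ β'/2 + β := by
        have h1 : t + Q*β/2 ≤ (β'/2 + β)*Q := by linarith only [tle, h1Q]
        have h2' : (t + Q/2*β)/Q ≤ β'/2 + β := by
          rw [div_le_iff₀ hQ0]
          linarith
        linarith
      have hAr : (4:ℝ) ≤ (cfA a (M+2):ℝ) := by exact_mod_cast hA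
      have hjr : |(j:ℝ)| ≤ (cfA a (M+2):ℝ)/6 := hj
      have hjβ : |(j:ℝ)| * β ≤ ((cfA a (M+2):ℝ)/6)*β := mul_le_mul_of_nonneg_right hjr hβpos.le
      have hAβ4 : 4*β ≤ (cfA a (M+2):ℝ)*β := mul_le_mul_of_nonneg_right hAr hβpos.le
      have hDle : 21*(|v'| + |(j:ℝ)| * β) ≤ 20*β' := by
        linarith only [hfw2, hjβ, hAβ4, hrecβ, hβ''pos, hβpos]
      linarith only [hLHS4 j, hRHS, hDle]
  · -- condition (4b)
    intro _ k hk1 hk2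
    have hkS : k ∈ S := (hmemS k).2 ⟨hk1, hk2⟩
    have h1' : nint (θ' + (w:ℝ)*a) ≤ nint (θ' + (k:ℝ)*a) := hwmin k hkS
    linarith [nint_nonneg (θ' + (k:ℝ)*a)]
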